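/- Let $X$ be a reduced, connected, 1-dimensional proper scheme over a field $k$, let $\phi : \tilde{X} \to X$ be its normalization, and let $Z \subset X$ be the (finite) set of non-regular points of $X$. Assume that for every $z \in Z$ and every $z' \in \phi^{-1}(z)$ the residue fields satisfy $k(z') = k(z) = k$, and that $Z$ is nonempty. Then every degree-zero zero-cycle on $X$ is the pushforward under $\phi$ of a degree-zero zero-cycle on $\tilde{X}$. -/

import Mathlib

open AlgebraicGeometry CategoryTheory Limits

noncomputable section

/-- The structure map `k → Γ(X, O_X)` of a `k`-scheme. -/
def structΓ (k : Type) [Field k] (X : Scheme) [X.Over (Spec (CommRingCat.of k))] :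
    k →+* Γ(X, ⊤) :=
  ((Scheme.ΓSpecIso (CommRingCat.of k)).inv ≫
    (X ↘ Spec (CommRingCat.of k)).appTop : CommRingCat.of k ⟶ _).hom

/-- The map `k → k(x)` to the residue field of a point of a `k`-scheme. -/
def resMap (k : Type) [Field k] (X : Scheme) [X.Over (Spec (CommRingCat.of k))] (x : X) :
    k →+* X.residueField x :=
  ((X.Γevaluation x).hom : Γ(X, ⊤) →+* X.residueField x).comp (structΓ k X)

/-- The degree `[k(x) : k]` of a point of a `k`-scheme. -/
def pointDeg (k : Type) [Field k] (X : Scheme) [X.Over (Spec (CommRingCat.of k))] (x : X) : ℕ :=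
  letI := (resMap k X x).toAlgebra
  Module.finrank k (X.residueField x)

/-- A zero-cycle is a finitely supported `ℤ`-valued function on (closed) points. -/
abbrev ZeroCycle (X : Scheme) := X →₀ ℤ

/-- A zero-cycle is admissible if it is supported on closed points. -/
def ZeroCycle.IsOnClosedPoints {X : Scheme} (c : ZeroCycle X) : Prop :=
  ∀ x ∈ c.support, IsClosed ({x} : Set X)

/-- The degree `∑ nᵢ [k(xᵢ) : k]` of a zero-cycle over the base field `k`. -/
def ZeroCycle.deg (k : Type) [Field k] (X : Scheme) [X.Over (Spec (CommRingCat.of k))]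
    (c : ZeroCycle X) : ℤ :=
  c.sum fun x n => n * pointDeg k X x

/-- The residue degree `[k(x) : k(φ(x))]` of a point along a morphism. -/
def relDeg {X' X : Scheme} (φ : X' ⟶ X) (x : X') : ℕ :=
  letI := ((φ.residueFieldMap x).hom : X.residueField (φ.base x) →+* X'.residueField x).toAlgebra
  Module.finrank (X.residueField (φ.base x)) (X'.residueField x)

/-- Pushforward of zero-cycles: `x ↦ [k(x) : k(φ(x))] ⬝ φ(x)`. -/
def ZeroCycle.push {X' X : Scheme} (φ : X' ⟶ X) (c : ZeroCycle X') : ZeroCycle X :=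
  c.sum fun x n => Finsupp.single (φ.base x) (n * relDeg φ x)

/-- A point of a scheme is regular if its local ring is regular; for points of schemes of
dimension at most one this means that the local ring is a field or a discrete valuation
ring. -/
def IsRegularPoint (X : Scheme) (x : X) : Prop :=
  IsField (X.presheaf.stalk x) ∨
    ∃ _ : IsDomain (X.presheaf.stalk x), IsDiscreteValuationRing (X.presheaf.stalk x)

/-! ### Auxiliary lemmas -/

theorem aux_finrank_one {K L : Type} [Field K] [Field L] (f : K →+* L)
    (hf : Function.Bijective f) :
    (letI := f.toAlgebra; Module.finrank K L) = 1 := by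
  letI := f.toAlgebra
  refine finrank_eq_one (1 : L) one_ne_zero fun w => ?_
  obtain ⟨c, hc⟩ := hf.2 w
  exact ⟨c, by rw [Algebra.smul_def, RingHom.algebraMap_toAlgebra, hc, mul_one]⟩

theorem aux_finrank_eq {K L₁ L₂ : Type} [Field K] [Field L₁] [Field L₂]
    (f₁ : K →+* L₁) (f₂ : K →+* L₂) (g : L₁ →+* L₂) (hg : Function.Bijective g)
    (hcomp : g.comp f₁ = f₂) :
    (letI := f₁.toAlgebra; Module.finrank K L₁) =
      (letI := f₂.toAlgebra; Module.finrank K L₂) := by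
  letI := f₁.toAlgebra
  letI := f₂.toAlgebra
  let e : L₁ ≃+* L₂ := RingEquiv.ofBijective g hg
  let e' : L₁ ≃ₗ[K] L₂ :=
    { e with
      map_smul' := fun c x => by
        simp only [Algebra.smul_def, RingHom.algebraMap_toAlgebra, RingHom.id_apply]
        show g (f₁ c * x) = f₂ c * g x
        rw [map_mul, ← hcomp]; rfl }
  exact e'.finrank_eq

theorem aux_closed_point {Y : Type*} [TopologicalSpace Y] [CompactSpace Y] [T0Space Y]
    {F : Set Y} (hF : IsClosed F) (hne : F.Nonempty) :
    ∃ y ∈ F, IsClosed ({y} : Set Y) := by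
  obtain ⟨V, hVF, ⟨y, hy⟩, hVc, hmin⟩ := hF.exists_minimal_nonempty_closed_subset hne
  have h1 : closure {y} = V :=
    hmin _ (hVc.closure_subset_iff.mpr (Set.singleton_subset_iff.mpr hy)) ⟨y, subset_closure rfl⟩
      isClosed_closure
  have : V = {y} := by
    apply Set.eq_singleton_iff_unique_mem.mpr
    refine ⟨hy, fun z hz => ?_⟩
    have h2 : closure {z} = V :=
      hmin _ (hVc.closure_subset_iff.mpr (Set.singleton_subset_iff.mpr hz)) ⟨z, subset_closure rfl⟩
        isClosed_closure
    have hzy : z ⤳ y := by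
      rw [specializes_iff_mem_closure]; rw [h2, ← h1]; exact subset_closure rfl
    have hyz : y ⤳ z := by
      rw [specializes_iff_mem_closure]; rw [h1, ← h2]; exact subset_closure rfl
    exact (hzy.antisymm hyz).eq
  exact ⟨y, hVF hy, this ▸ hVc⟩

theorem resMap_triangle (k : Type) [Field k] (X Xt : Scheme)
    [X.Over (Spec (CommRingCat.of k))] [Xt.Over (Spec (CommRingCat.of k))]
    (φ : Xt ⟶ X) (hφover : φ ≫ (X ↘ Spec (CommRingCat.of k)) = Xt ↘ Spec (CommRingCat.of k))
    (x' : Xt) :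
    ((φ.residueFieldMap x').hom : X.residueField (φ.base x') →+* Xt.residueField x').comp
      (resMap k X (φ.base x')) = resMap k Xt x' := by
  ext a
  show (φ.residueFieldMap x').hom ((X.Γevaluation (φ.base x')).hom (structΓ k X a)) =
    (Xt.Γevaluation x').hom (structΓ k Xt a)
  rw [Scheme.Γevaluation_naturality_apply]
  congr 1
  show (φ.appTop).hom (structΓ k X a) = structΓ k Xt a
  simp only [structΓ, ← hφover, Scheme.Hom.comp_appTop]
  rfl

theorem regular_resfield {X Xt : Scheme} (φ : Xt ⟶ X) (U : X.Opens)
    (hiso : IsIso (φ ∣_ U)) (x' : Xt) (hx' : φ.base x' ∈ U) :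
    Function.Bijective ((φ.residueFieldMap x').hom :
      X.residueField (φ.base x') →+* Xt.residueField x') := by
  have hx'mem : x' ∈ φ ⁻¹ᵁ U := hx'
  let x'' : (φ ⁻¹ᵁ U).toScheme := ⟨x', hx'mem⟩
  have hb : (φ ⁻¹ᵁ U).ι.base x'' = x' := rfl
  have heq : ((φ ⁻¹ᵁ U).ι ≫ φ) = (φ ∣_ U) ≫ U.ι := (morphismRestrict_ι φ U).symm
  have h1 : IsIso (((φ ⁻¹ᵁ U).ι ≫ φ).residueFieldMap x'') := by
    rw [heq]; infer_instance
  rw [Scheme.residueFieldMap_comp] at h1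
  have h2 : IsIso (φ.residueFieldMap ((φ ⁻¹ᵁ U).ι.base x'')) :=
    @IsIso.of_isIso_comp_right _ _ _ _ _ _ ((φ ⁻¹ᵁ U).ι.residueFieldMap x'') _ h1
  rw [hb] at h2
  exact (ConcreteCategory.isIso_iff_bijective _).mp h2

theorem regular_unique {X Xt : Scheme} (φ : Xt ⟶ X) (U : X.Opens)
    (hiso : IsIso (φ ∣_ U)) (x' y' : Xt) (hx' : φ.base x' ∈ U)
    (h : φ.base y' = φ.base x') : y' = x' := by
  have hinj : Function.Injective (φ ∣_ U).base := by
    have : IsIso (φ ∣_ U).base := inferInstance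
    exact (TopCat.homeoOfIso (asIso (φ ∣_ U).base)).injective
  rw [morphismRestrict_base] at hinj
  have hy' : y' ∈ φ ⁻¹ᵁ U := show φ.base y' ∈ U by rw [h]; exact hx'
  exact congrArg Subtype.val (hinj (a₁ := ⟨y', hy'⟩) (a₂ := ⟨x', hx'⟩) (Subtype.ext h))

theorem relDeg_eq_one {X Xt : Scheme} (φ : Xt ⟶ X) (x' : Xt)
    (h : Function.Bijective ((φ.residueFieldMap x').hom :
      X.residueField (φ.base x') →+* Xt.residueField x')) :
    relDeg φ x' = 1 := by
  letI := ((φ.residueFieldMap x').hom : X.residueField (φ.base x') →+* Xt.residueField x').toAlgebra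
  unfold relDeg
  refine finrank_eq_one (1 : Xt.residueField x') one_ne_zero fun w => ?_
  obtain ⟨c, hc⟩ := h.2 w
  exact ⟨c, by rw [Algebra.smul_def, RingHom.algebraMap_toAlgebra, hc, mul_one]⟩

/-- The pushforward as an additive map. -/
def pushHom {X' X : Scheme} (φ : X' ⟶ X) : ZeroCycle X' →+ ZeroCycle X where
  toFun := ZeroCycle.push φ
  map_zero' := Finsupp.sum_zero_index
  map_add' c d := by
    show ZeroCycle.push φ (c + d) = ZeroCycle.push φ c + ZeroCycle.push φ d
    unfold ZeroCycle.push
    exact Finsupp.sum_add_index' (fun x => by simp) (fun x m n => by rw [add_mul, Finsupp.single_add])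

theorem push_single {X' X : Scheme} (φ : X' ⟶ X) (x : X') (n : ℤ) :
    ZeroCycle.push φ (Finsupp.single x n) = Finsupp.single (φ.base x) (n * relDeg φ x) := by
  unfold ZeroCycle.push
  exact Finsupp.sum_single_index (by simp)

theorem deg_single (k : Type) [Field k] (X : Scheme) [X.Over (Spec (CommRingCat.of k))]
    (x : X) (n : ℤ) :
    ZeroCycle.deg k X (Finsupp.single x n) = n * pointDeg k X x := by
  unfold ZeroCycle.deg
  exact Finsupp.sum_single_index (by simp)

/-- The degree as an additive map. -/
def degHom (k : Type) [Field k] (X : Scheme) [X.Over (Spec (CommRingCat.of k))] :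
    ZeroCycle X →+ ℤ where
  toFun := ZeroCycle.deg k X
  map_zero' := Finsupp.sum_zero_index
  map_add' c d := by
    show ZeroCycle.deg k X (c + d) = ZeroCycle.deg k X c + ZeroCycle.deg k X d
    unfold ZeroCycle.deg
    exact Finsupp.sum_add_index' (fun x => by simp) (fun x m n => add_mul m n _)

theorem stmt_0 (k : Type) [Field k] (X Xt : Scheme)
    [X.Over (Spec (CommRingCat.of k))] [Xt.Over (Spec (CommRingCat.of k))]
    [IsReduced X] [ConnectedSpace X] (hdim : topologicalKrullDim X = 1)
    [IsProper (X ↘ Spec (CommRingCat.of k))]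
    (φ : Xt ⟶ X) [IsFinite φ] (hφover : φ ≫ (X ↘ Spec (CommRingCat.of k)) =
      Xt ↘ Spec (CommRingCat.of k))
    (hsurj : Function.Surjective φ.base)
    (hnormal : ∀ x : Xt, ∃ _ : IsDomain (Xt.presheaf.stalk x),
      IsIntegrallyClosed (Xt.presheaf.stalk x))
    (U : X.Opens) (hU : (U : Set X) = {x : X | IsRegularPoint X x})
    (hiso : IsIso (φ ∣_ U))
    (hres : ∀ z : X, ¬ IsRegularPoint X z →
      Function.Bijective (resMap k X z) ∧
      ∀ z' : Xt, φ.base z' = z → Function.Bijective (resMap k Xt z'))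
    (hZne : ∃ z : X, ¬ IsRegularPoint X z)
    (α : ZeroCycle X) (hα : α.IsOnClosedPoints) (hdeg : α.deg k X = 0) :
    ∃ β : ZeroCycle Xt, β.IsOnClosedPoints ∧ β.deg k Xt = 0 ∧ β.push φ = α := by
  -- compactness of `Xt`
  have hqc : QuasiCompact (φ ≫ (X ↘ Spec (CommRingCat.of k))) := inferInstance
  rw [hφover] at hqc
  have hcpt : CompactSpace Xt := QuasiCompact.compactSpace_of_compactSpace (Xt ↘ Spec (CommRingCat.of k))
  -- a good lift exists for every point in the support of `α`
  have hP : ∀ x ∈ α.support, ∃ x' : Xt, φ.base x' = x ∧ IsClosed ({x'} : Set Xt) ∧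
      relDeg φ x' = 1 ∧ pointDeg k Xt x' = pointDeg k X x := by
    intro x hx
    by_cases hreg : IsRegularPoint X x
    · -- regular case: unique preimage via the isomorphism over `U`
      obtain ⟨x', hx'⟩ := hsurj x
      subst hx'
      have hxU : φ.base x' ∈ U := by
        have : φ.base x' ∈ (U : Set X) := by rw [hU]; exact hreg
        exact this
      have hbij := regular_resfield φ U hiso x' hxU
      refine ⟨x', rfl, ?_, relDeg_eq_one φ x' hbij, ?_⟩
      · have : ({x'} : Set Xt) = φ.base ⁻¹' {φ.base x'} := by
          ext y
          simp only [Set.mem_singleton_iff, Set.mem_preimage]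
          exact ⟨fun h => h ▸ rfl, fun h => regular_unique φ U hiso x' y hxU h⟩
        rw [this]
        exact (hα _ hx).preimage φ.base.hom.2
      · unfold pointDeg
        exact (aux_finrank_eq (resMap k X (φ.base x')) (resMap k Xt x') _ hbij
          (resMap_triangle k X Xt φ hφover x')).symm
    · -- non-regular case: residue fields are all `k`
      obtain ⟨h1, h2⟩ := hres x hreg
      have hFcl : IsClosed (φ.base ⁻¹' {x}) := (hα _ hx).preimage φ.base.hom.2
      have hFne : (φ.base ⁻¹' {x}).Nonempty := by
        obtain ⟨x', hx'⟩ := hsurj x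
        exact ⟨x', hx'⟩
      obtain ⟨x', hx'F, hx'cl⟩ := aux_closed_point hFcl hFne
      have hφx' : φ.base x' = x := hx'F
      subst hφx'
      have h2' := h2 x' rfl
      have hbij : Function.Bijective ((φ.residueFieldMap x').hom :
          X.residueField (φ.base x') →+* Xt.residueField x') := by
        constructor
        · exact RingHom.injective _
        · intro l
          obtain ⟨a, ha⟩ := h2'.2 l
          refine ⟨resMap k X (φ.base x') a, ?_⟩
          have := congrArg (fun (f : k →+* Xt.residueField x') => f a)
            (resMap_triangle k X Xt φ hφover x')
          simpa [ha] using this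
      refine ⟨x', rfl, hx'cl, relDeg_eq_one φ x' hbij, ?_⟩
      show pointDeg k Xt x' = pointDeg k X (φ.base x')
      have e1 : pointDeg k Xt x' = 1 := by unfold pointDeg; exact aux_finrank_one _ h2'
      have e2 : pointDeg k X (φ.base x') = 1 := by unfold pointDeg; exact aux_finrank_one _ h1
      rw [e1, e2]
    -- build the lifted cycle
  have hXtne : Nonempty Xt := by
    obtain ⟨x₀⟩ := (inferInstance : Nonempty X)
    exact ⟨(hsurj x₀).choose⟩
  classical
  let L : X → Xt := fun x => if h : x ∈ α.support then (hP x h).choose else Classical.arbitrary Xt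
  have hLφ : ∀ x ∈ α.support, φ.base (L x) = x := fun x h => by
    simp only [L, dif_pos h]; exact (hP x h).choose_spec.1
  have hLcl : ∀ x ∈ α.support, IsClosed ({L x} : Set Xt) := fun x h => by
    simp only [L, dif_pos h]; exact (hP x h).choose_spec.2.1
  have hLrel : ∀ x ∈ α.support, relDeg φ (L x) = 1 := fun x h => by
    simp only [L, dif_pos h]; exact (hP x h).choose_spec.2.2.1
  have hLdeg : ∀ x ∈ α.support, pointDeg k Xt (L x) = pointDeg k X x := fun x h => by
    simp only [L, dif_pos h]; exact (hP x h).choose_spec.2.2.2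
  refine ⟨∑ x ∈ α.support, Finsupp.single (L x) (α x), ?_, ?_, ?_⟩
  · -- supported on closed points
    intro y hy
    have := Finsupp.support_finset_sum (s := α.support)
      (f := fun x => Finsupp.single (L x) (α x)) hy
    obtain ⟨x, hxs, hx⟩ := Finset.mem_biUnion.mp this
    have : y = L x := by
      by_contra hne
      exact hne (Finset.mem_singleton.mp (Finsupp.support_single_subset hx))
    exact this ▸ hLcl x hxs
  · -- degree zero
    rw [show ZeroCycle.deg k Xt (∑ x ∈ α.support, Finsupp.single (L x) (α x)) =
        degHom k Xt (∑ x ∈ α.support, Finsupp.single (L x) (α x)) from rfl, map_sum]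
    have : ∀ x ∈ α.support, degHom k Xt (Finsupp.single (L x) (α x)) =
        α x * pointDeg k X x := by
      intro x h
      show ZeroCycle.deg k Xt (Finsupp.single (L x) (α x)) = _
      rw [deg_single, hLdeg x h]
    rw [Finset.sum_congr rfl this]
    rw [← hdeg]
    rfl
  · -- pushes forward to `α`
    rw [show ZeroCycle.push φ (∑ x ∈ α.support, Finsupp.single (L x) (α x)) =
        pushHom φ (∑ x ∈ α.support, Finsupp.single (L x) (α x)) from rfl, map_sum]
    have : ∀ x ∈ α.support, pushHom φ (Finsupp.single (L x) (α x)) =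
        Finsupp.single x (α x) := by
      intro x h
      show ZeroCycle.push φ (Finsupp.single (L x) (α x)) = _
      rw [push_single, hLrel x h, hLφ x h]
      simp
    rw [Finset.sum_congr rfl this]
    exact Finsupp.sum_single α

end
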